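/- Every two distinct X-splits displayed as edges of a common phylogenetic X-tree are compatible, and conversely any collection of pairwise compatible X-splits is the split set of a unique (up to isomorphism) X-tree. -/

import Mathlib

open SimpleGraph

namespace SplitsEquiv

variable {V : Type}

lemma acyclic_anti {G H : SimpleGraph V} (h : H ≤ G) (hG : G.IsAcyclic) : H.IsAcyclic :=
  fun _ c hc => hG (c.mapLe h) (hc.mapLe h)

lemma reachable_deleteEdges_iff {G : SimpleGraph V} {S : Set (Sym2 V)} {a b : V} :
    (G.deleteEdges S).Reachable a b ↔ ∃ p : G.Walk a b, ∀ e ∈ p.edges, e ∉ S := by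
  constructor
  · rintro ⟨p⟩
    induction p with
    | nil => exact ⟨Walk.nil, by simp⟩
    | cons h q ih =>
      obtain ⟨p', hp'⟩ := ih
      rw [SimpleGraph.deleteEdges_adj] at h
      refine ⟨Walk.cons h.1 p', ?_⟩
      intro e he
      rw [Walk.edges_cons, List.mem_cons] at he
      rcases he with rfl | he
      · exact h.2
      · exact hp' e he
  · rintro ⟨p, hp⟩
    induction p with
    | nil => exact Reachable.refl _
    | cons h q ih =>
      have h1 : (G.deleteEdges S).Adj _ _ :=
        SimpleGraph.deleteEdges_adj.mpr ⟨h, hp _ (by simp)⟩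
      exact h1.reachable.trans (ih fun e he => hp e (by simp [he]))

/-- In an acyclic graph, any path between endpoints reachable in `G.deleteEdges S`
avoids `S`. -/
lemma path_edges_avoid {G : SimpleGraph V} (hac : G.IsAcyclic) {S : Set (Sym2 V)} {a b : V}
    (r : (G.deleteEdges S).Reachable a b) {P : G.Walk a b} (hP : P.IsPath) :
    ∀ e ∈ P.edges, e ∉ S := by
  classical
  obtain ⟨p, hp⟩ := reachable_deleteEdges_iff.mp r
  have h1 : (⟨P, hP⟩ : G.Path a b) = p.toPath := hac.path_unique _ _
  intro e he
  apply hp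
  have : P = (p.toPath : G.Walk a b) := congrArg Subtype.val h1
  exact p.edges_toPath_subset (this ▸ he)

lemma bridge_not_reachable {G : SimpleGraph V} (hac : G.IsAcyclic) {u v : V} (h : G.Adj u v) :
    ¬ (G.deleteEdges {s(u, v)}).Reachable u v := by
  classical
  intro hr
  obtain ⟨p, hp⟩ := reachable_deleteEdges_iff.mp hr
  have h1 : (⟨Walk.cons h Walk.nil, by simp [Walk.isPath_def, h.ne]⟩ : G.Path u v) = p.toPath :=
    hac.path_unique _ _
  have h2 : s(u, v) ∈ (Walk.cons h (Walk.nil : G.Walk v v)).edges := by simp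
  have h3 : (Walk.cons h (Walk.nil : G.Walk v v)) = (p.toPath : G.Walk u v) :=
    congrArg Subtype.val h1
  exact hp _ (p.edges_toPath_subset (h3 ▸ h2)) rfl

lemma reach_or {G : SimpleGraph V} (hconn : G.Connected) (u v z : V) :
    (G.deleteEdges {s(u, v)}).Reachable z u ∨ (G.deleteEdges {s(u, v)}).Reachable z v := by
  obtain ⟨p⟩ := hconn.preconnected z u
  induction p with
  | nil => exact Or.inl (Reachable.refl _)
  | @cons a m u h q ih =>
    by_cases he : s(a, m) = s(u, v)
    · rw [Sym2.eq_iff] at he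
      rcases he with ⟨rfl, rfl⟩ | ⟨rfl, rfl⟩
      · exact Or.inl (Reachable.refl _)
      · exact Or.inr (Reachable.refl _)
    · have h1 : (G.deleteEdges {s(u, v)}).Adj a m :=
        SimpleGraph.deleteEdges_adj.mpr ⟨h, by simpa using he⟩
      rcases ih with h2 | h2
      · exact Or.inl (h1.reachable.trans h2)
      · exact Or.inr (h1.reachable.trans h2)

/-- Excluding one more edge whose endpoint cannot reach the target. -/
lemma reach_exclude {G : SimpleGraph V} {S : Set (Sym2 V)} {c d z z' : V}
    (h : (G.deleteEdges S).Reachable z z')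
    (hc : ¬ (G.deleteEdges S).Reachable c z') :
    (G.deleteEdges (insert s(c, d) S)).Reachable z z' := by
  classical
  obtain ⟨p, hp⟩ := reachable_deleteEdges_iff.mp h
  by_cases hcd : s(c, d) ∈ p.edges
  · exfalso
    have hcs : c ∈ p.support := p.fst_mem_support_of_mem_edges hcd
    refine hc (reachable_deleteEdges_iff.mpr ⟨p.dropUntil c hcs, ?_⟩)
    intro e he
    exact hp e (p.edges_dropUntil_subset hcs he)
  · refine reachable_deleteEdges_iff.mpr ⟨p, ?_⟩
    intro e he
    rw [Set.mem_insert_iff]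
    push_neg
    exact ⟨fun h' => hcd (h' ▸ he), hp e he⟩

lemma reach_side {G : SimpleGraph V} {e : Sym2 V} {c d z a : V}
    (hz : (G.deleteEdges {e}).Reachable z a)
    (hc : ¬ (G.deleteEdges {e}).Reachable c a) :
    (G.deleteEdges {s(c, d)}).Reachable z a :=
  Reachable.mono
    (G.deleteEdges_anti (Set.singleton_subset_iff.mpr (Set.mem_insert _ _)))
    (reach_exclude (S := {e}) hz hc)

lemma adj_del {G : SimpleGraph V} {u v : V} (h : G.Adj u v) {e : Sym2 V}
    (hne : s(u, v) ≠ e) : (G.deleteEdges {e}).Adj u v :=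
  SimpleGraph.deleteEdges_adj.mpr ⟨h, by simpa using hne⟩

/-- Key lemma: in a finite acyclic graph, the component of `u` after deleting a
set `S` of edges (each `S`-edge having at most one partner at each vertex other
than `u`, and at most two partners at `u`) contains a vertex of degree at most 2. -/
lemma exists_low_degree [Fintype V] {G : SimpleGraph V} (hac : G.IsAcyclic)
    (S : Set (Sym2 V)) (u : V)
    (h2 : ∀ w z z', (G.deleteEdges S).Reachable w u → w ≠ u → G.Adj w z → G.Adj w z' →
        s(w, z) ∈ S → s(w, z') ∈ S → z = z')
    (h3 : ∃ z₁ z₂ : V, ∀ z, G.Adj u z → s(u, z) ∈ S → z = z₁ ∨ z = z₂) :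
    ∃ w, (G.deleteEdges S).Reachable w u ∧ (G.neighborSet w).ncard ≤ 2 := by
  classical
  set H := G.deleteEdges S with hH
  have hacH : H.IsAcyclic := acyclic_anti (G.deleteEdges_le S) hac
  set C : Finset V := Finset.univ.filter (fun z => H.Reachable z u) with hC
  have hCne : C.Nonempty := ⟨u, Finset.mem_filter.mpr ⟨Finset.mem_univ _, Reachable.refl _⟩⟩
  obtain ⟨w, hwC, hwmax⟩ := C.exists_max_image (fun z => H.dist u z) hCne
  have hwreach : H.Reachable w u := by simpa [hC] using hwC
  by_cases hd : H.dist u w = 0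
  · -- C = {u}
    have hCu : ∀ z, H.Reachable z u → z = u := by
      intro z hz
      have hz' : H.dist u z = 0 := Nat.le_zero.mp (hd ▸ hwmax z (by simp [hC, hz]))
      exact (hz.symm.dist_eq_zero_iff.mp hz').symm
    obtain ⟨z₁, z₂, hz⟩ := h3
    have hwu : w = u := hCu w hwreach
    subst hwu
    refine ⟨w, hwreach, ?_⟩
    have hsub : G.neighborSet w ⊆ {z₁, z₂} := by
      intro z hzn
      by_cases hS : s(w, z) ∈ S
      · exact hz z hzn hS
      · exfalso
        have : H.Adj z w := (SimpleGraph.deleteEdges_adj.mpr ⟨hzn, hS⟩).symm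
        have := hCu z this.reachable
        subst this
        exact G.irrefl hzn
    calc (G.neighborSet w).ncard ≤ ({z₁, z₂} : Set V).ncard := Set.ncard_le_ncard hsub (Set.toFinite _)
      _ ≤ 2 := by
        refine le_trans (Set.ncard_insert_le _ _) ?_
        simp
  · -- far vertex, positive distance
    have hwu : w ≠ u := by
      intro h; subst h; exact hd (Reachable.dist_eq_zero_iff (Reachable.refl _) |>.mpr rfl)
    obtain ⟨P, hPpath, hPlen⟩ := hwreach.exists_path_of_dist
    have hPne : w ≠ u := hwu
    obtain ⟨m, hwm, Q, rfl⟩ := P.exists_eq_cons_of_ne hPne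
    -- every H-neighbor of w equals m
    have hHnbr : ∀ z, H.Adj w z → z = m := by
      intro z hz
      have hzreach : H.Reachable z u := hz.symm.reachable.trans hwreach
      obtain ⟨R, hRpath, hRlen⟩ := hzreach.exists_path_of_dist
      have hRle : R.length ≤ H.dist u w := by
        rw [hRlen, SimpleGraph.dist_comm]
        exact hwmax z (by simp [hC, hzreach])
      by_cases hws : w ∈ R.support
      · exfalso
        have hdrop : (R.dropUntil w hws).IsPath := hRpath.dropUntil hws
        have heq : (⟨R.dropUntil w hws, hdrop⟩ : H.Path w u) = ⟨Walk.cons hwm Q, hPpath⟩ :=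
          hacH.path_unique _ _
        have hlen : (R.dropUntil w hws).length = (Walk.cons hwm Q).length :=
          congrArg Walk.length (congrArg Subtype.val heq)
        have hspec := congrArg Walk.length (R.take_spec hws)
        rw [Walk.length_append] at hspec
        have hcomm : H.dist w u = H.dist u w := SimpleGraph.dist_comm
        have htake0 : (R.takeUntil w hws).length = 0 := by omega
        have hzw : z = w := Walk.eq_of_length_eq_zero htake0
        subst hzw
        exact H.irrefl hz
      · have hcons : (Walk.cons hz R).IsPath := hRpath.cons hws
        have heq : (⟨Walk.cons hz R, hcons⟩ : H.Path w u) = ⟨Walk.cons hwm Q, hPpath⟩ :=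
          hacH.path_unique _ _
        have hval : (Walk.cons hz R) = (Walk.cons hwm Q) := congrArg Subtype.val heq
        have hsup : (Walk.cons hz R).support = (Walk.cons hwm Q).support :=
          congrArg Walk.support hval
        rw [Walk.support_cons, Walk.support_cons] at hsup
        simp only [List.cons.injEq, true_and] at hsup
        rw [R.support_eq_cons, Q.support_eq_cons] at hsup
        simp only [List.cons.injEq] at hsup
        exact hsup.1
    -- neighbors of w: either S-partners or H-neighbors
    refine ⟨w, hwreach, ?_⟩
    by_cases hex : ∃ z₀, G.Adj w z₀ ∧ s(w, z₀) ∈ S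
    · obtain ⟨z₀, hz₀a, hz₀S⟩ := hex
      have hsub : G.neighborSet w ⊆ {m, z₀} := by
        intro z hzn
        by_cases hS : s(w, z) ∈ S
        · exact Or.inr (h2 w z z₀ hwreach hwu hzn hz₀a hS hz₀S)
        · exact Or.inl (hHnbr z (SimpleGraph.deleteEdges_adj.mpr ⟨hzn, hS⟩))
      calc (G.neighborSet w).ncard ≤ ({m, z₀} : Set V).ncard :=
            Set.ncard_le_ncard hsub (Set.toFinite _)
        _ ≤ 2 := le_trans (Set.ncard_insert_le _ _) (by simp)
    · have hsub : G.neighborSet w ⊆ {m} := by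
        intro z hzn
        by_cases hS : s(w, z) ∈ S
        · exact absurd ⟨z, hzn, hS⟩ hex
        · exact hHnbr z (SimpleGraph.deleteEdges_adj.mpr ⟨hzn, hS⟩)
      calc (G.neighborSet w).ncard ≤ ({m} : Set V).ncard :=
            Set.ncard_le_ncard hsub (Set.toFinite _)
        _ ≤ 2 := by simp

end SplitsEquiv

/-- An `X`-tree in the sense of Semple and Steel: a finite tree with a
labelling map `φ : X → V` such that every vertex of degree at most 2 is
labelled. -/
structure XTree (X : Type) where
  V : Type
  [fintypeV : Fintype V]
  G : SimpleGraph V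
  connected : G.Connected
  acyclic : G.IsAcyclic
  φ : X → V
  labelLowDegree : ∀ v : V, (G.neighborSet v).ncard ≤ 2 → v ∈ Set.range φ

/-- The set of `X`-splits induced by the edges of `T` (both sides of each edge). -/
noncomputable def XTree.splits {X : Type} (T : XTree X) : Set (Set X) :=
  { A | ∃ u v : T.V, T.G.Adj u v ∧
      A = { x | (T.G.deleteEdges {s(u, v)}).Reachable (T.φ x) u } }

/-- Compatibility of the splits `A|Aᶜ` and `B|Bᶜ`: one of the four pairwise
intersections is empty. -/
def SplitCompatible {X : Type} (A B : Set X) : Prop :=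
  A ∩ B = ∅ ∨ A ∩ Bᶜ = ∅ ∨ Aᶜ ∩ B = ∅ ∨ Aᶜ ∩ Bᶜ = ∅

/-- Isomorphism of `X`-trees. -/
def XTree.Isom {X : Type} (T₁ T₂ : XTree X) : Prop :=
  ∃ e : T₁.V ≃ T₂.V,
    (∀ u v : T₁.V, T₁.G.Adj u v ↔ T₂.G.Adj (e u) (e v)) ∧
    ∀ x, e (T₁.φ x) = T₂.φ x

attribute [instance] XTree.fintypeV

namespace SplitsEquiv

section XTreeLemmas

variable {X : Type}

/-- The side of the edge `(u,v)` containing `u`, as a set of labels. -/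
def side (T : XTree X) (u v : T.V) : Set X :=
  { x | (T.G.deleteEdges {s(u, v)}).Reachable (T.φ x) u }

lemma mem_splits_iff {T : XTree X} {A : Set X} :
    A ∈ T.splits ↔ ∃ u v, T.G.Adj u v ∧ A = side T u v := Iff.rfl

variable {T : XTree X}

lemma side_mem_splits {u v : T.V} (h : T.G.Adj u v) : side T u v ∈ T.splits :=
  ⟨u, v, h, rfl⟩

lemma bridge_T {u v : T.V} (h : T.G.Adj u v) :
    ¬ (T.G.deleteEdges {s(u, v)}).Reachable u v :=
  bridge_not_reachable T.acyclic h

lemma reach_or_T (u v z : T.V) :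
    (T.G.deleteEdges {s(u, v)}).Reachable z u ∨ (T.G.deleteEdges {s(u, v)}).Reachable z v :=
  reach_or T.connected u v z

lemma side_nonempty {u v : T.V} (h : T.G.Adj u v) : (side T u v).Nonempty := by
  obtain ⟨w, hwreach, hwdeg⟩ := exists_low_degree T.acyclic {s(u, v)} u
    (by
      intro w z z' _ hwu _ _ hS hS'
      simp only [Set.mem_singleton_iff, Sym2.eq_iff] at hS hS'
      rcases hS with ⟨h1, h2⟩ | ⟨h1, h2⟩
      · exact absurd h1 hwu
      · rcases hS' with ⟨h3, h4⟩ | ⟨h3, h4⟩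
        · exact absurd h3 hwu
        · exact h2.trans h4.symm)
    (⟨v, v, by
      intro z hadj hS
      simp only [Set.mem_singleton_iff, Sym2.eq_iff] at hS
      rcases hS with ⟨-, rfl⟩ | ⟨h1, h2⟩
      · exact Or.inl rfl
      · exact (T.G.irrefl (h2 ▸ hadj)).elim⟩)
  obtain ⟨x, rfl⟩ := T.labelLowDegree w hwdeg
  exact ⟨x, hwreach⟩

lemma not_mem_side {u v : T.V} (h : T.G.Adj u v) {x : X} :
    x ∉ side T u v ↔ x ∈ side T v u := by
  constructor
  · intro hx
    rcases reach_or_T u v (T.φ x) with h1 | h1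
    · exact absurd h1 hx
    · rw [side, Set.mem_setOf_eq, Sym2.eq_swap]
      exact h1
  · intro hx hx'
    rw [side, Set.mem_setOf_eq, Sym2.eq_swap] at hx
    exact bridge_T h (hx'.symm.trans hx)

lemma side_compl {u v : T.V} (h : T.G.Adj u v) : (side T u v)ᶜ = side T v u := by
  ext x
  exact not_mem_side h

lemma side_compl' {u v : T.V} (h : T.G.Adj u v) : (side T u v) = (side T v u)ᶜ := by
  rw [side_compl h.symm]

/-- The key step: if `c` lies on the `b`-side of the edge `(a,b)` and `a` lies on
the `c`-side of the edge `(c,d)`, then the `a`-side of `(a,b)` is contained in the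
`c`-side of `(c,d)`. -/
lemma side_step {a b c d : T.V} (hab : T.G.Adj a b)
    (hcb : (T.G.deleteEdges {s(a, b)}).Reachable c b)
    (hac : (T.G.deleteEdges {s(c, d)}).Reachable a c) {x : X}
    (hx : x ∈ side T a b) : x ∈ side T c d := by
  have hca : ¬ (T.G.deleteEdges {s(a, b)}).Reachable c a := by
    intro h'
    exact bridge_T hab (h'.symm.trans hcb)
  exact (reach_side hx hca).trans hac

lemma reach_swap {G : SimpleGraph T.V} {u v z w : T.V} 
    (h : (G.deleteEdges {s(u, v)}).Reachable z w) :
    (G.deleteEdges {s(v, u)}).Reachable z w := by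
  rwa [Sym2.eq_swap]

lemma splits_compatible (T : XTree X) :
    ∀ A ∈ T.splits, ∀ B ∈ T.splits, SplitCompatible A B := by
  rintro A ⟨a, b, hab, rfl⟩ B ⟨c, d, hcd, rfl⟩
  show SplitCompatible (side T a b) (side T c d)
  by_cases he : s(a, b) = s(c, d)
  · rcases Sym2.eq_iff.mp he with ⟨rfl, rfl⟩ | ⟨rfl, rfl⟩
    · exact Or.inr (Or.inl (Set.inter_compl_self _))
    · rw [← side_compl hcd]
      exact Or.inl (Set.compl_inter_self _)
  · have hba : (T.G.deleteEdges {s(c, d)}).Adj b a := adj_del hab.symm (by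
      rw [Sym2.eq_swap]; exact he)
    have hdc : (T.G.deleteEdges {s(a, b)}).Adj d c := adj_del hcd.symm (by
      rw [Sym2.eq_swap]; intro h'; exact he h'.symm)
    rcases reach_or_T a b c with hc1 | hc1
    · rcases reach_or_T c d a with ha1 | ha1
      · -- side b a ⊆ side c d, i.e. Aᶜ ⊆ B
        refine Or.inr (Or.inr (Or.inr (Set.eq_empty_iff_forall_notMem.mpr ?_)))
        rintro x ⟨hx1, hx2⟩
        rw [side_compl hab] at hx1
        exact hx2 (side_step hab.symm (reach_swap hc1) (hba.reachable.trans ha1) hx1)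
      · -- side b a ⊆ side d c, i.e. Aᶜ ⊆ Bᶜ
        refine Or.inr (Or.inr (Or.inl (Set.eq_empty_iff_forall_notMem.mpr ?_)))
        rintro x ⟨hx1, hx2⟩
        rw [side_compl hab] at hx1
        have : x ∈ side T d c :=
          side_step hab.symm (reach_swap (hdc.reachable.trans hc1))
            (reach_swap (hba.reachable.trans ha1)) hx1
        rw [← side_compl hcd] at this
        exact this hx2
    · rcases reach_or_T c d a with ha1 | ha1
      · -- side a b ⊆ side c d : A ⊆ B
        refine Or.inr (Or.inl (Set.eq_empty_iff_forall_notMem.mpr ?_))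
        rintro x ⟨hx1, hx2⟩
        exact hx2 (side_step hab hc1 ha1 hx1)
      · -- side a b ⊆ side d c : A ⊆ Bᶜ
        refine Or.inl (Set.eq_empty_iff_forall_notMem.mpr ?_)
        rintro x ⟨hx1, hx2⟩
        have : x ∈ side T d c :=
          side_step hab (hdc.reachable.trans hc1) (reach_swap ha1) hx1
        rw [← side_compl hcd] at this
        exact this hx2

/-- Between two edges pointing "away" from each other there is a labelled vertex:
if `c` is on the `a`-side of `(a,b)` and `a` is on the `d`-side of `(c,d)`, then
some label lies in `side a b` but not in `side c d`. -/
lemma middle_label {a b c d : T.V} (hab : T.G.Adj a b) (hcd : T.G.Adj c d)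
    (had : (T.G.deleteEdges {s(c, d)}).Reachable a d) :
    ∃ x, x ∈ side T a b ∧ x ∉ side T c d := by
  classical
  set S : Set (Sym2 T.V) := {s(a, b), s(c, d)} with hS
  have hmono1 : T.G.deleteEdges S ≤ T.G.deleteEdges {s(a, b)} :=
    T.G.deleteEdges_anti (by intro t ht; simp only [Set.mem_singleton_iff] at ht; simp [hS, ht])
  have hmono2 : T.G.deleteEdges S ≤ T.G.deleteEdges {s(c, d)} :=
    T.G.deleteEdges_anti (by intro t ht; simp only [Set.mem_singleton_iff] at ht; simp [hS, ht])
  have hbC : ¬ (T.G.deleteEdges S).Reachable b a := by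
    intro h'
    exact bridge_T hab (h'.mono hmono1).symm
  have hcC : ¬ (T.G.deleteEdges S).Reachable c a := by
    intro h'
    exact bridge_T hcd ((h'.mono hmono2).trans had)
  have h2 : ∀ w z z', (T.G.deleteEdges S).Reachable w a → w ≠ a → T.G.Adj w z → T.G.Adj w z' →
      s(w, z) ∈ S → s(w, z') ∈ S → z = z' := by
    have key : ∀ w z, (T.G.deleteEdges S).Reachable w a → w ≠ a → T.G.Adj w z →
        s(w, z) ∈ S → z = c := by
      intro w z hw hwa hz hmem
      rcases hmem with h' | h'
      · rcases Sym2.eq_iff.mp h' with ⟨h1, h2⟩ | ⟨h1, h2⟩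
        · exact absurd h1 hwa
        · exact absurd (h1 ▸ hw) hbC
      · rcases Sym2.eq_iff.mp h' with ⟨h1, h2⟩ | ⟨h1, h2⟩
        · exact absurd (h1 ▸ hw) hcC
        · exact h2
    intro w z z' hw hwa hz hz' hm hm'
    rw [key w z hw hwa hz hm, key w z' hw hwa hz' hm']
  have h3 : ∃ z₁ z₂ : T.V, ∀ z, T.G.Adj a z → s(a, z) ∈ S → z = z₁ ∨ z = z₂ := by
    by_cases hac0 : a = c
    · refine ⟨b, d, fun z hz hm => ?_⟩
      rcases hm with h' | h'
      · rcases Sym2.eq_iff.mp h' with ⟨-, h2⟩ | ⟨h1, h2⟩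
        · exact Or.inl h2
        · exact absurd h1 hab.ne
      · rcases Sym2.eq_iff.mp h' with ⟨-, h2⟩ | ⟨h1, h2⟩
        · exact Or.inr h2
        · exact absurd (hac0 ▸ h1 ▸ rfl : c = d) hcd.ne
    · refine ⟨b, c, fun z hz hm => ?_⟩
      rcases hm with h' | h'
      · rcases Sym2.eq_iff.mp h' with ⟨-, h2⟩ | ⟨h1, h2⟩
        · exact Or.inl h2
        · exact absurd h1 hab.ne
      · rcases Sym2.eq_iff.mp h' with ⟨h1, -⟩ | ⟨-, h2⟩
        · exact absurd h1 hac0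
        · exact Or.inr h2
  obtain ⟨w, hwreach, hwdeg⟩ := exists_low_degree T.acyclic S a h2 h3
  obtain ⟨x, hx⟩ := T.labelLowDegree w hwdeg
  refine ⟨x, ?_, ?_⟩
  · show (T.G.deleteEdges {s(a, b)}).Reachable (T.φ x) a
    rw [hx]
    exact hwreach.mono hmono1
  · intro hmem
    have h0 : (T.G.deleteEdges {s(c, d)}).Reachable (T.φ x) a := by
      rw [hx]
      exact hwreach.mono hmono2
    have h1 : (T.G.deleteEdges {s(c, d)}).Reachable (T.φ x) d := h0.trans had
    exact bridge_T hcd (hmem.symm.trans h1)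

/-- Distinct (oriented) edges induce distinct splits. -/
lemma side_inj {a b c d : T.V} (hab : T.G.Adj a b) (hcd : T.G.Adj c d)
    (h : side T a b = side T c d) : a = c ∧ b = d := by
  by_cases he : s(a, b) = s(c, d)
  · rcases Sym2.eq_iff.mp he with ⟨h1, h2⟩ | ⟨rfl, rfl⟩
    · exact ⟨h1, h2⟩
    · exfalso
      obtain ⟨x, hx⟩ := side_nonempty hab
      have hx' : x ∈ side T b a := by rw [← h]; exact hx
      rw [← not_mem_side hab] at hx'
      exact hx' hx
  · exfalso
    have hba : (T.G.deleteEdges {s(c, d)}).Adj b a := adj_del hab.symm (by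
      rw [Sym2.eq_swap]; exact he)
    have hdc : (T.G.deleteEdges {s(a, b)}).Adj d c := adj_del hcd.symm (by
      rw [Sym2.eq_swap]; intro h'; exact he h'.symm)
    rcases reach_or_T a b c with hc1 | hc1
    · rcases reach_or_T c d a with ha1 | ha1
      · obtain ⟨x, hx⟩ := side_nonempty hab.symm
        have hx2 : x ∈ side T c d :=
          side_step hab.symm (reach_swap hc1) (hba.reachable.trans ha1) hx
        exact (not_mem_side hab).mpr hx (h ▸ hx2)
      · obtain ⟨x, hx1, hx2⟩ := middle_label hab hcd ha1
        rw [← h] at hx2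
        exact hx2 hx1
    · rcases reach_or_T c d a with ha1 | ha1
      · obtain ⟨x, hx1, hx2⟩ := middle_label hab.symm hcd.symm
          (reach_swap (hba.reachable.trans ha1))
        have h4 : x ∉ side T a b := (not_mem_side hab).mpr hx1
        rw [h] at h4
        exact hx2 ((not_mem_side hcd).mp h4)
      · obtain ⟨x, hx⟩ := side_nonempty hab
        have hx2 : x ∈ side T d c :=
          side_step hab (hdc.reachable.trans hc1) (reach_swap ha1) hx
        exact (not_mem_side hcd).mpr hx2 (h ▸ hx)

end XTreeLemmas

section Buneman

variable {X : Type} [Fintype X] [Nonempty X]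

/-- A consistent orientation of a split system: a choice of one side of every
split such that chosen sides pairwise intersect. -/
def IsOrient (Sig : Set (Set X)) (U : Set (Set X)) : Prop :=
  U ⊆ Sig ∧ (∀ A ∈ Sig, (A ∈ U ↔ Aᶜ ∉ U)) ∧ ∀ A ∈ U, ∀ B ∈ U, (A ∩ B).Nonempty

def Orient (Sig : Set (Set X)) : Type := {U : Set (Set X) // IsOrient Sig U}

instance {Sig : Set (Set X)} : Finite (Orient Sig) :=
  Subtype.finite

/-- The Buneman graph on consistent orientations. -/
def BG (Sig : Set (Set X)) : SimpleGraph (Orient Sig) where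
  Adj U W := ∃ A, U.val \ W.val = {A} ∧ W.val \ U.val = {Aᶜ}
  symm := by
    constructor
    rintro U W ⟨A, h1, h2⟩
    exact ⟨Aᶜ, h2, by rw [compl_compl]; exact h1⟩
  loopless := by
    constructor
    rintro U ⟨A, h1, -⟩
    rw [Set.diff_self] at h1
    exact (Set.singleton_ne_empty A) h1.symm

variable {Sig : Set (Set X)}

lemma orient_sub {U : Orient Sig} {A : Set X} (h : A ∈ U.val) : A ∈ Sig := U.2.1 h

lemma orient_iff {U : Orient Sig} {A : Set X} (hA : A ∈ Sig) : A ∈ U.val ↔ Aᶜ ∉ U.val :=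
  U.2.2.1 A hA

lemma orient_inter {U : Orient Sig} {A B : Set X} (hA : A ∈ U.val) (hB : B ∈ U.val) :
    (A ∩ B).Nonempty := U.2.2.2 A hA B hB

lemma orient_eq_of_diff_empty {U W : Orient Sig} (h : U.val \ W.val = ∅) : U = W := by
  have h2 : W.val \ U.val = ∅ := by
    by_contra h3
    obtain ⟨A, hAW, hAU⟩ := Set.nonempty_iff_ne_empty.mpr h3
    have hASig : A ∈ Sig := orient_sub hAW
    have hAc : Aᶜ ∈ U.val := by
      by_contra h4
      exact hAU ((orient_iff hASig).mpr h4)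
    have hAcW : Aᶜ ∉ W.val := (orient_iff hASig).mp hAW
    have : Aᶜ ∈ U.val \ W.val := ⟨hAc, hAcW⟩
    rw [h] at this
    exact this
  exact Subtype.ext (Set.Subset.antisymm (Set.diff_eq_empty.mp h) (Set.diff_eq_empty.mp h2))

section Hyps

variable (hne : ∀ A ∈ Sig, A ≠ ∅ ∧ A ≠ Set.univ)
  (hcompl : ∀ A ∈ Sig, Aᶜ ∈ Sig)
  (hcompat : ∀ A ∈ Sig, ∀ B ∈ Sig, SplitCompatible A B)

include hne in
lemma sig_nonempty {A : Set X} (hA : A ∈ Sig) : A.Nonempty :=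
  Set.nonempty_iff_ne_empty.mpr (hne A hA).1

include hne in
lemma sig_compl_nonempty {A : Set X} (hA : A ∈ Sig) : Aᶜ.Nonempty :=
  Set.nonempty_compl.mpr (hne A hA).2

include hne in
lemma sig_ne_compl {A : Set X} (hA : A ∈ Sig) : A ≠ Aᶜ := by
  intro h
  obtain ⟨x, hx⟩ := sig_nonempty hne hA
  exact (h ▸ hx) hx

include hne hcompl in
lemma flip_spec {U : Orient Sig} {A : Set X} (hA : A ∈ U.val)
    (hmin : ∀ B ∈ U.val, B ≠ A → (B ∩ Aᶜ).Nonempty) :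
    ∃ U' : Orient Sig, U'.val = insert Aᶜ (U.val \ {A}) ∧
      U.val \ U'.val = {A} ∧ U'.val \ U.val = {Aᶜ} ∧ (BG Sig).Adj U U' := by
  have hASig : A ∈ Sig := orient_sub hA
  have hAcSig : Aᶜ ∈ Sig := hcompl A hASig
  have hAne : A ≠ Aᶜ := sig_ne_compl hne hASig
  have hAcU : Aᶜ ∉ U.val := (orient_iff hASig).mp hA
  set F : Set (Set X) := insert Aᶜ (U.val \ {A}) with hF
  have hmemF : ∀ B, B ∈ F ↔ (B = Aᶜ ∨ (B ∈ U.val ∧ B ≠ A)) := by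
    intro B
    simp [hF, Set.mem_insert_iff, Set.mem_diff]
  have hAF : A ∉ F := by
    rw [hmemF]
    rintro (h | ⟨-, h⟩)
    · exact hAne h
    · exact h rfl
  have hAcF : Aᶜ ∈ F := by rw [hmemF]; exact Or.inl rfl
  have hOr : IsOrient Sig F := by
    refine ⟨?_, ?_, ?_⟩
    · intro B hB
      rcases (hmemF B).mp hB with rfl | ⟨hB', -⟩
      · exact hAcSig
      · exact orient_sub hB'
    · intro B hBSig
      by_cases hBA : B = A
      · subst hBA
        simp only [hAF, false_iff, not_not]
        exact hAcF
      · by_cases hBAc : B = Aᶜ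
        · subst hBAc
          rw [compl_compl]
          simp only [hAcF, true_iff]
          exact hAF
        · have hBcA : Bᶜ ≠ A := fun h => hBAc (by rw [← compl_compl B, h])
          have hBcAc : Bᶜ ≠ Aᶜ := fun h => hBA (compl_injective h)
          rw [hmemF, hmemF]
          simp only [hBAc, false_or, hBcAc]
          constructor
          · rintro ⟨hBU, -⟩ ⟨hBcU, -⟩
            exact (orient_iff hBSig).mp hBU hBcU
          · intro h
            have : Bᶜ ∉ U.val := fun hc => h ⟨hc, hBcA⟩
            exact ⟨(orient_iff hBSig).mpr this, hBA⟩
    · intro B hB C hC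
      rcases (hmemF B).mp hB with rfl | ⟨hBU, hBA⟩
      · rcases (hmemF C).mp hC with rfl | ⟨hCU, hCA⟩
        · simpa using sig_compl_nonempty hne hASig
        · rw [Set.inter_comm]
          exact hmin C hCU hCA
      · rcases (hmemF C).mp hC with rfl | ⟨hCU, hCA⟩
        · exact hmin B hBU hBA
        · exact orient_inter hBU hCU
  refine ⟨⟨F, hOr⟩, rfl, ?_, ?_, ?_⟩
  · ext B
    simp only [Set.mem_diff, Set.mem_singleton_iff]
    constructor
    · rintro ⟨hBU, hBF⟩
      by_contra hBA
      exact hBF ((hmemF B).mpr (Or.inr ⟨hBU, hBA⟩))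
    · rintro rfl
      exact ⟨hA, hAF⟩
  · ext B
    simp only [Set.mem_diff, Set.mem_singleton_iff]
    constructor
    · rintro ⟨hBF, hBU⟩
      rcases (hmemF B).mp hBF with rfl | ⟨hBU', -⟩
      · rfl
      · exact absurd hBU' hBU
    · rintro rfl
      exact ⟨hAcF, hAcU⟩
  · refine ⟨A, ?_, ?_⟩
    · ext B
      simp only [Set.mem_diff, Set.mem_singleton_iff]
      constructor
      · rintro ⟨hBU, hBF⟩
        by_contra hBA
        exact hBF ((hmemF B).mpr (Or.inr ⟨hBU, hBA⟩))
      · rintro rfl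
        exact ⟨hA, hAF⟩
    · ext B
      simp only [Set.mem_diff, Set.mem_singleton_iff]
      constructor
      · rintro ⟨hBF, hBU⟩
        rcases (hmemF B).mp hBF with rfl | ⟨hBU', -⟩
        · rfl
        · exact absurd hBU' hBU
      · rintro rfl
        exact ⟨hAcF, hAcU⟩

include hcompat in
lemma flip_edge_unique {U U' W W' : Orient Sig} {A : Set X}
    (h1 : (BG Sig).Adj U U') (h2 : (BG Sig).Adj W W')
    (hU : U.val \ U'.val = {A}) (hW : W.val \ W'.val = {A}) : U = W := by
  obtain ⟨C, hC1, hC2⟩ := h1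
  obtain ⟨D, hD1, hD2⟩ := h2
  have hCA : C = A := by
    have h' : ({A} : Set (Set X)) = {C} := hU ▸ hC1
    exact (Set.singleton_eq_singleton_iff.mp h').symm
  have hDA : D = A := by
    have h' : ({A} : Set (Set X)) = {D} := hW ▸ hD1
    exact (Set.singleton_eq_singleton_iff.mp h').symm
  rw [hCA] at hC1 hC2
  rw [hDA] at hD1 hD2
  have hAU : A ∈ U.val := by
    have : A ∈ U.val \ U'.val := hU ▸ rfl
    exact this.1
  have hAW : A ∈ W.val := by
    have : A ∈ W.val \ W'.val := hW ▸ rfl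
    exact this.1
  have hAcU' : Aᶜ ∈ U'.val := by
    have : Aᶜ ∈ U'.val \ U.val := hC2 ▸ rfl
    exact this.1
  have hAcW' : Aᶜ ∈ W'.val := by
    have : Aᶜ ∈ W'.val \ W.val := hD2 ▸ rfl
    exact this.1
  have hASig : A ∈ Sig := orient_sub hAU
  -- main step: same splits chosen away from A
  have main : ∀ (P P' Q Q' : Orient Sig) (_ : P.val \ P'.val = {A})
      (_ : P'.val \ P.val = {Aᶜ}) (_ : Q.val \ Q'.val = {A}) (_ : Q'.val \ Q.val = {Aᶜ})
      (_ : A ∈ P.val) (_ : A ∈ Q.val) (_ : Aᶜ ∈ P'.val) (_ : Aᶜ ∈ Q'.val),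
      ∀ B ∈ P.val, B ∈ Q.val := by
    intro P P' Q Q' hP1 hP2 hQ1 hQ2 hAP hAQ hAcP' hAcQ' B hBP
    by_contra hBQ
    have hBSig : B ∈ Sig := orient_sub hBP
    have hBA : B ≠ A := fun h => hBQ (h ▸ hAQ)
    have hBAc : B ≠ Aᶜ := by
      intro h
      have := (orient_iff hASig (U := P)).mp hAP
      exact this (h ▸ hBP)
    have hBcQ : Bᶜ ∈ Q.val := by
      by_contra h
      exact hBQ ((orient_iff hBSig).mpr h)
    have hBP' : B ∈ P'.val := by
      by_contra h
      have : B ∈ P.val \ P'.val := ⟨hBP, h⟩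
      rw [hP1] at this
      exact hBA this
    have hBcQ' : Bᶜ ∈ Q'.val := by
      by_contra h
      have : Bᶜ ∈ Q.val \ Q'.val := ⟨hBcQ, h⟩
      rw [hQ1] at this
      exact hBAc (by rw [← compl_compl B, Set.mem_singleton_iff.mp this])
    have n1 : (A ∩ B).Nonempty := orient_inter hAP hBP
    have n2 : (A ∩ Bᶜ).Nonempty := orient_inter hAQ hBcQ
    have n3 : (Aᶜ ∩ B).Nonempty := orient_inter hAcP' hBP'
    have n4 : (Aᶜ ∩ Bᶜ).Nonempty := orient_inter hAcQ' hBcQ'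
    rcases hcompat A hASig B hBSig with h | h | h | h
    · exact Set.nonempty_iff_ne_empty.mp n1 h
    · exact Set.nonempty_iff_ne_empty.mp n2 h
    · exact Set.nonempty_iff_ne_empty.mp n3 h
    · exact Set.nonempty_iff_ne_empty.mp n4 h
  apply Subtype.ext
  apply Set.Subset.antisymm
  · intro B hB
    exact main U U' W W' hU hC2 hW hD2 hAU hAW hAcU' hAcW' B hB
  · intro B hB
    exact main W W' U U' hW hD2 hU hC2 hAW hAU hAcW' hAcU' B hB

include hne hcompl in
lemma flip_min {U W : Orient Sig} (hUW : U ≠ W) :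
    ∃ U' : Orient Sig, ∃ A, (BG Sig).Adj U U' ∧ U.val \ U'.val = {A} ∧
      U'.val \ U.val = {Aᶜ} ∧ A ∈ U.val ∧ A ∉ W.val ∧
      U'.val \ W.val = (U.val \ W.val) \ {A} := by
  classical
  have hdne : (U.val \ W.val).Nonempty := by
    rw [Set.nonempty_iff_ne_empty]
    intro h
    exact hUW (orient_eq_of_diff_empty h)
  set t := U.val \ W.val with ht
  obtain ⟨B, hBmem, hBmin⟩ := (Set.toFinite t).toFinset.exists_min_image Set.ncard
    (by rwa [Set.Finite.toFinset_nonempty])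
  rw [Set.Finite.mem_toFinset] at hBmem
  obtain ⟨hBU, hBW⟩ := hBmem
  have hBSig : B ∈ Sig := orient_sub hBU
  have hBcW : Bᶜ ∈ W.val := by
    by_contra h
    exact hBW ((orient_iff hBSig (U := W)).mpr h)
  have hmin : ∀ C ∈ U.val, C ≠ B → (C ∩ Bᶜ).Nonempty := by
    intro C hCU hCB
    rw [Set.nonempty_iff_ne_empty]
    intro hempty
    have hCsubB : C ⊆ B := by
      intro y hy
      by_contra hyB
      exact absurd hempty (Set.nonempty_iff_ne_empty.mp ⟨y, hy, hyB⟩)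
    by_cases hCW : C ∈ W.val
    · obtain ⟨y, hy1, hy2⟩ := orient_inter hBcW hCW
      exact hy1 (hCsubB hy2)
    · have hCt : C ∈ t := ⟨hCU, hCW⟩
      have h1 : B.ncard ≤ C.ncard := hBmin C (by rwa [Set.Finite.mem_toFinset])
      have h2 : C.ncard < B.ncard :=
        Set.ncard_lt_ncard (HasSubset.Subset.ssubset_of_ne hCsubB hCB) (Set.toFinite _)
      omega
  obtain ⟨U', hU'val, hd1, hd2, hadj⟩ := flip_spec hne hcompl hBU hmin
  refine ⟨U', B, hadj, hd1, hd2, hBU, hBW, ?_⟩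
  rw [hU'val]
  ext C
  simp only [Set.mem_diff, Set.mem_insert_iff, Set.mem_singleton_iff]
  constructor
  · rintro ⟨rfl | ⟨hCU, hCB⟩, hCW⟩
    · exact absurd hBcW hCW
    · exact ⟨⟨hCU, hCW⟩, hCB⟩
  · rintro ⟨⟨hCU, hCW⟩, hCB⟩
    exact ⟨Or.inr ⟨hCU, hCB⟩, hCW⟩

include hne hcompl in
lemma orient_reachable (U W : Orient Sig) : (BG Sig).Reachable U W := by
  classical
  suffices h : ∀ n (U : Orient Sig), (U.val \ W.val).ncard = n → (BG Sig).Reachable U W by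
    exact h _ U rfl
  intro n
  induction n using Nat.strong_induction_on with
  | _ n ih =>
    intro U hn
    by_cases hUW : U = W
    · exact hUW ▸ Reachable.refl U
    · obtain ⟨U', A, hadj, -, -, hAU, hAW, hd⟩ := flip_min hne hcompl hUW
      have hAt : A ∈ U.val \ W.val := ⟨hAU, hAW⟩
      have hlt : (U'.val \ W.val).ncard < n := by
        rw [hd, ← hn]
        apply Set.ncard_lt_ncard _ (Set.toFinite _)
        rw [Set.ssubset_iff_subset_ne]
        refine ⟨Set.diff_subset, fun h => ?_⟩
        have h2 : A ∈ (U.val \ W.val) \ {A} := by rw [h]; exact hAt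
        exact h2.2 rfl
      exact hadj.reachable.trans (ih _ hlt U' rfl)

include hcompat in
lemma no_flip_in_deleted {U₀ W₀ : Orient Sig} {A : Set X}
    (hadj : (BG Sig).Adj U₀ W₀) (hd : U₀.val \ W₀.val = {A}) :
    ∀ P Q : Orient Sig, ((BG Sig).deleteEdges {s(U₀, W₀)}).Adj P Q →
      A ∈ P.val → A ∉ Q.val → False := by
  intro P Q hPQ hAP hAQ
  rw [SimpleGraph.deleteEdges_adj] at hPQ
  obtain ⟨hPQ', hPQe⟩ := hPQ
  obtain ⟨C, hC1, hC2⟩ := hPQ'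
  have hAC : A = C := by
    have : A ∈ P.val \ Q.val := ⟨hAP, hAQ⟩
    rw [hC1] at this
    exact this
  have hPU : P = U₀ := flip_edge_unique hcompat ⟨C, hC1, hC2⟩ hadj (hAC ▸ hC1) hd
  have hd2 : W₀.val \ U₀.val = {Aᶜ} := by
    obtain ⟨D, hD1, hD2⟩ := hadj
    have hDA : D = A := by
      have h' : ({A} : Set (Set X)) = {D} := hd ▸ hD1
      exact (Set.singleton_eq_singleton_iff.mp h').symm
    exact hDA ▸ hD2
  have hQW : Q = W₀ := by
    refine flip_edge_unique hcompat (A := Aᶜ) ((BG Sig).adj_symm ⟨C, hC1, hC2⟩) 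
      ((BG Sig).adj_symm hadj) ?_ hd2
    rw [hC2, ← hAC]
  apply hPQe
  rw [hPU, hQW]
  rfl

/-- Find an adjacent pair along a walk where a predicate flips. -/
lemma exists_adj_step {W : Type} {H : SimpleGraph W} {a b : W} (p : H.Walk a b)
    (pr : W → Prop) (ha : pr a) (hb : ¬ pr b) :
    ∃ x y, H.Adj x y ∧ pr x ∧ ¬ pr y := by
  induction p with
  | nil => exact absurd ha hb
  | @cons u m v h q ih =>
    by_cases hm : pr m
    · exact ih hm hb
    · exact ⟨u, m, h, ha, hm⟩

include hcompat in
lemma BG_bridge {U₀ W₀ : Orient Sig} {A : Set X}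
    (hadj : (BG Sig).Adj U₀ W₀) (hd : U₀.val \ W₀.val = {A}) :
    ¬ ((BG Sig).deleteEdges {s(U₀, W₀)}).Reachable U₀ W₀ := by
  rintro ⟨p⟩
  have hAU : A ∈ U₀.val := by
    have : A ∈ U₀.val \ W₀.val := hd ▸ rfl
    exact this.1
  have hAW : A ∉ W₀.val := by
    have : A ∈ U₀.val \ W₀.val := hd ▸ rfl
    exact this.2
  obtain ⟨P, Q, hPQ, hAP, hAQ⟩ := exists_adj_step p (fun R => A ∈ R.val) hAU hAW
  exact no_flip_in_deleted hcompat hadj hd P Q hPQ hAP hAQ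

include hcompat in
lemma BG_acyclic : (BG Sig).IsAcyclic := by
  rw [SimpleGraph.isAcyclic_iff_forall_edge_isBridge]
  intro e he
  induction e with
  | _ U W =>
    rw [SimpleGraph.mem_edgeSet] at he
    obtain ⟨A, hd1, hd2⟩ := he
    exact SimpleGraph.isBridge_iff.mpr (BG_bridge hcompat ⟨A, hd1, hd2⟩ hd1)

include hne hcompl hcompat in
lemma reach_del {U₀ W₀ : Orient Sig} {A : Set X}
    (hadj : (BG Sig).Adj U₀ W₀) (hd : U₀.val \ W₀.val = {A})
    (hd2 : W₀.val \ U₀.val = {Aᶜ}) (U W : Orient Sig) (hU : A ∈ U.val) (hW : A ∈ W.val) :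
    ((BG Sig).deleteEdges {s(U₀, W₀)}).Reachable U W := by
  classical
  suffices h : ∀ n (U : Orient Sig), A ∈ U.val → (U.val \ W.val).ncard = n →
      ((BG Sig).deleteEdges {s(U₀, W₀)}).Reachable U W by
    exact h _ U hU rfl
  intro n
  induction n using Nat.strong_induction_on with
  | _ n ih =>
    intro U hAU hn
    by_cases hUW : U = W
    · exact hUW ▸ Reachable.refl U
    · obtain ⟨U', B, hadj', hdB1, hdB2, hBU, hBW, hdd⟩ := flip_min hne hcompl hUW
      have hBA : B ≠ A := fun h => hBW (h ▸ hW)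
      have hAU' : A ∈ U'.val := by
        by_contra h
        have : A ∈ U.val \ U'.val := ⟨hAU, h⟩
        rw [hdB1] at this
        exact hBA this.symm
      have hnedge : s(U, U') ≠ s(U₀, W₀) := by
        intro h
        rcases Sym2.eq_iff.mp h with ⟨rfl, rfl⟩ | ⟨rfl, rfl⟩
        · rw [hd] at hdB1
          exact hBA (Set.singleton_eq_singleton_iff.mp hdB1).symm
        · rw [hd2] at hdB1
          have hBAc : B = Aᶜ := (Set.singleton_eq_singleton_iff.mp hdB1).symm
          exact (orient_iff (orient_sub hAU) (U := U)).mp hAU (hBAc ▸ hBU)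
      have hadjd : ((BG Sig).deleteEdges {s(U₀, W₀)}).Adj U U' :=
        SimpleGraph.deleteEdges_adj.mpr ⟨hadj', by simpa using hnedge⟩
      have hlt : (U'.val \ W.val).ncard < n := by
        rw [hdd, ← hn]
        apply Set.ncard_lt_ncard _ (Set.toFinite _)
        rw [Set.ssubset_iff_subset_ne]
        refine ⟨Set.diff_subset, fun h => ?_⟩
        have h2 : B ∈ (U.val \ W.val) \ {B} := by rw [h]; exact ⟨hBU, hBW⟩
        exact h2.2 rfl
      exact hadjd.reachable.trans (ih _ hlt U' hAU' rfl)

/-- The orientation determined by a label. -/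
def labelOrient (Sig : Set (Set X)) (hcompl : ∀ A ∈ Sig, Aᶜ ∈ Sig) (x : X) : Orient Sig :=
  ⟨{C | C ∈ Sig ∧ x ∈ C}, fun C hC => hC.1,
    fun A hA => by
      constructor
      · rintro ⟨-, hx⟩ ⟨-, hx'⟩
        exact hx' hx
      · intro h
        refine ⟨hA, ?_⟩
        by_contra hx
        exact h ⟨hcompl A hA, hx⟩,
    fun A hA B hB => ⟨x, hA.2, hB.2⟩⟩

include hne hcompat in
lemma BG_side_eq {U₀ W₀ : Orient Sig} {A : Set X}
    (hadj : (BG Sig).Adj U₀ W₀) (hd : U₀.val \ W₀.val = {A})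
    (hd2 : W₀.val \ U₀.val = {Aᶜ}) :
    {x | ((BG Sig).deleteEdges {s(U₀, W₀)}).Reachable (labelOrient Sig hcompl x) U₀} = A := by
  have hAU : A ∈ U₀.val := by
    have h' : A ∈ U₀.val \ W₀.val := hd ▸ rfl
    exact h'.1
  have hASig : A ∈ Sig := orient_sub hAU
  ext x
  simp only [Set.mem_setOf_eq]
  constructor
  · rintro ⟨p⟩
    by_contra hxA
    have hstart : A ∉ (labelOrient Sig hcompl x).val := fun h => hxA h.2
    obtain ⟨P, Q, hPQ, hAP, hAQ⟩ := exists_adj_step p (fun R => A ∉ R.val) hstart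
      (by simpa using hAU)
    exact no_flip_in_deleted hcompat hadj hd Q P hPQ.symm (not_not.mp hAQ) hAP
  · intro hxA
    exact reach_del hne hcompl hcompat hadj hd hd2 _ U₀ ⟨hASig, hxA⟩ hAU

/-- The canonical orientation pointing towards the split `A`. -/
def stdOrient (Sig : Set (Set X)) (A : Set X) : Set (Set X) :=
  {C | C ∈ Sig ∧ (A ⊆ C ∨ Aᶜ ⊂ C)}

include hne hcompl hcompat in
lemma stdOrient_isOrient {A : Set X} (hA : A ∈ Sig) : IsOrient Sig (stdOrient Sig A) := by
  have hAne : A.Nonempty := sig_nonempty hne hA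
  have hAcne : Aᶜ.Nonempty := sig_compl_nonempty hne hA
  refine ⟨fun C hC => hC.1, ?_, ?_⟩
  · intro C hC
    constructor
    · rintro ⟨-, hC1⟩ ⟨-, hC2⟩
      rcases hC1 with h1 | h1
      · rcases hC2 with h2 | h2
        · obtain ⟨y, hy⟩ := hAne
          exact (h2 hy) (h1 hy)
        · have h3 : C ⊆ A := Set.compl_subset_compl.mp h2.1
          have h4 : A = C := Set.Subset.antisymm h1 h3
          exact (ssubset_irrefl Aᶜ) (h4 ▸ h2)
      · rcases hC2 with h2 | h2
        · have h3 : C ⊆ Aᶜ := Set.subset_compl_comm.mp h2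
          exact (ssubset_irrefl Aᶜ) (h1.trans_le h3)
        · obtain ⟨y, hy⟩ := hAcne
          exact (h2.1 hy) (h1.1 hy)
    · intro h
      refine ⟨hC, ?_⟩
      have hCc : Cᶜ ∈ Sig := hcompl C hC
      have h' : ¬ (A ⊆ Cᶜ ∨ Aᶜ ⊂ Cᶜ) := fun hh => h ⟨hCc, hh⟩
      push_neg at h'
      obtain ⟨h1, h2⟩ := h'
      rcases hcompat A hA C hC with hh | hh | hh | hh
      · exfalso
        apply h1
        intro y hy
        intro hyC
        exact absurd hh (Set.nonempty_iff_ne_empty.mp ⟨y, hy, hyC⟩)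
      · left
        intro y hy
        by_contra hyC
        exact absurd hh (Set.nonempty_iff_ne_empty.mp ⟨y, hy, hyC⟩)
      · left
        have h3 : C ⊆ A := by
          intro y hy
          by_contra hyA
          exact absurd hh (Set.nonempty_iff_ne_empty.mp ⟨y, hyA, hy⟩)
        have h4 : Aᶜ ⊆ Cᶜ := Set.compl_subset_compl.mpr h3
        have h5 : Aᶜ = Cᶜ := by
          by_contra h6
          exact h2 (HasSubset.Subset.ssubset_of_ne h4 h6)
        rw [compl_injective h5]
      · have h3 : Aᶜ ⊆ C := by
          intro y hy
          by_contra hyC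
          exact absurd hh (Set.nonempty_iff_ne_empty.mp ⟨y, hy, hyC⟩)
        by_cases h4 : Aᶜ = C
        · exfalso
          apply h1
          rw [← h4, compl_compl]
        · right
          exact HasSubset.Subset.ssubset_of_ne h3 h4
  · rintro C ⟨hC, hC1⟩ D ⟨hD, hD1⟩
    rcases hC1 with h1 | h1
    · rcases hD1 with h2 | h2
      · exact hAne.mono (Set.subset_inter h1 h2)
      · obtain ⟨y, hy1, hy2⟩ := Set.exists_of_ssubset h2
        have hyA : y ∈ A := by
          by_contra h
          exact hy2 h
        exact ⟨y, h1 hyA, hy1⟩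
    · rcases hD1 with h2 | h2
      · obtain ⟨y, hy1, hy2⟩ := Set.exists_of_ssubset h1
        have hyA : y ∈ A := by
          by_contra h
          exact hy2 h
        exact ⟨y, hy1, h2 hyA⟩
      · exact hAcne.mono (Set.subset_inter h1.1 h2.1)

include hne hcompl in
lemma stdOrient_diff {A : Set X} (hA : A ∈ Sig) :
    stdOrient Sig A \ stdOrient Sig Aᶜ = {A} := by
  have hAne : A.Nonempty := sig_nonempty hne hA
  have hAcne : Aᶜ.Nonempty := sig_compl_nonempty hne hA
  ext C
  simp only [stdOrient, Set.mem_diff, Set.mem_setOf_eq, Set.mem_singleton_iff, compl_compl]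
  constructor
  · rintro ⟨⟨hC, hC1⟩, hC2⟩
    have h' : ¬ (Aᶜ ⊆ C ∨ A ⊂ C) := fun hh => hC2 ⟨hC, hh⟩
    push_neg at h'
    obtain ⟨h1, h2⟩ := h'
    rcases hC1 with h3 | h3
    · by_contra h4
      exact h2 (HasSubset.Subset.ssubset_of_ne h3 (fun h => h4 h.symm))
    · exact absurd h3.1 h1
  · rintro rfl
    refine ⟨⟨hA, Or.inl subset_rfl⟩, ?_⟩
    rintro ⟨-, h1 | h1⟩
    · obtain ⟨y, hy⟩ := hAcne
      exact hy (h1 hy)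
    · exact (ssubset_irrefl _) h1


include hne hcompl in
lemma BG_lowdeg (U : Orient Sig) (hdeg : ((BG Sig).neighborSet U).ncard ≤ 2) :
    U ∈ Set.range (labelOrient Sig hcompl) := by
  classical
  set M : Set (Set X) := {A | A ∈ U.val ∧ ∀ B ∈ U.val, B ⊆ A → B = A} with hM
  -- every chosen side contains a minimal chosen side
  have claim_a : ∀ A ∈ U.val, ∃ C ∈ M, C ⊆ A := by
    suffices h : ∀ n, ∀ A ∈ U.val, A.ncard = n → ∃ C ∈ M, C ⊆ A by
      intro A hA
      exact h _ A hA rfl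
    intro n
    induction n using Nat.strong_induction_on with
    | _ n ih =>
      intro A hA hn
      by_cases hmin : ∀ B ∈ U.val, B ⊆ A → B = A
      · exact ⟨A, ⟨hA, hmin⟩, subset_rfl⟩
      · push_neg at hmin
        obtain ⟨B, hBU, hBA, hBne⟩ := hmin
        have hlt : B.ncard < n := by
          rw [← hn]
          exact Set.ncard_lt_ncard (HasSubset.Subset.ssubset_of_ne hBA hBne) (Set.toFinite _)
        obtain ⟨C, hC, hCB⟩ := ih _ hlt B hBU rfl
        exact ⟨C, hC, hCB.trans hBA⟩
  -- minimal sides give rise to neighbours, injectively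
  have hMcard : M.ncard ≤ 2 := by
    set g : Set X → Orient Sig := fun A =>
      if h : IsOrient Sig (insert Aᶜ (U.val \ {A})) then ⟨_, h⟩ else U with hg
    have hgval : ∀ A ∈ M, (g A).val = insert Aᶜ (U.val \ {A}) ∧ (BG Sig).Adj U (g A) := by
      intro A hA
      have hmin' : ∀ B ∈ U.val, B ≠ A → (B ∩ Aᶜ).Nonempty := by
        intro B hBU hBA
        rw [Set.nonempty_iff_ne_empty]
        intro hempty
        apply hBA
        apply hA.2 B hBU
        intro y hy
        by_contra hyA
        exact absurd hempty (Set.nonempty_iff_ne_empty.mp ⟨y, hy, hyA⟩)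
      obtain ⟨U', hU'val, -, -, hadj⟩ := flip_spec hne hcompl hA.1 hmin'
      have : g A = U' := by
        rw [hg]
        simp only
        exact (dif_pos (hU'val ▸ U'.2)).trans (Subtype.ext hU'val.symm)
      rw [this]
      exact ⟨hU'val, hadj⟩
    have hmaps : ∀ A ∈ M, g A ∈ (BG Sig).neighborSet U := fun A hA => (hgval A hA).2
    have hinj : Set.InjOn g M := by
      intro A hA A' hA' hgg
      by_contra hne'
      have h1 : A ∈ (g A').val := by
        rw [(hgval A' hA').1]
        right
        exact ⟨hA.1, hne'⟩
      have h2 : A ∉ (g A).val := by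
        rw [(hgval A hA).1]
        rintro (h | h)
        · exact sig_ne_compl hne (orient_sub hA.1) h
        · exact h.2 rfl
      rw [hgg] at h2
      exact h2 h1
    calc M.ncard ≤ ((BG Sig).neighborSet U).ncard :=
          Set.ncard_le_ncard_of_injOn g hmaps hinj (Set.toFinite _)
      _ ≤ 2 := hdeg
  -- find a label realising U
  have key : ∃ x : X, ∀ B ∈ U.val, x ∈ B := by
    rcases Set.eq_empty_or_nonempty M with hMe | ⟨A₁, hA₁⟩
    · refine ⟨Classical.arbitrary X, fun B hB => ?_⟩
      obtain ⟨C, hC, -⟩ := claim_a B hB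
      rw [hMe] at hC
      exact hC.elim
    · by_cases h2 : ∃ A₂ ∈ M, A₂ ≠ A₁
      · obtain ⟨A₂, hA₂, hA₂ne⟩ := h2
        have hsub : M ⊆ {A₁, A₂} := by
          intro A₃ hA₃
          by_contra hA₃ne
          simp only [Set.mem_insert_iff, Set.mem_singleton_iff, not_or] at hA₃ne
          have h3 : ({A₁, A₂, A₃} : Set (Set X)).ncard = 3 := by
            rw [Set.ncard_insert_of_notMem (by
              simp only [Set.mem_insert_iff, Set.mem_singleton_iff, not_or]
              exact ⟨fun h => hA₂ne h.symm, fun h => hA₃ne.1 h.symm⟩) (Set.toFinite _),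
              Set.ncard_insert_of_notMem (by
                simp only [Set.mem_singleton_iff]
                exact fun h => hA₃ne.2 h.symm) (Set.toFinite _),
              Set.ncard_singleton]
          have h4 : ({A₁, A₂, A₃} : Set (Set X)) ⊆ M := by
            intro B hB
            rcases hB with rfl | rfl | rfl
            · exact hA₁
            · exact hA₂
            · exact hA₃
          have h5 := Set.ncard_le_ncard h4 (Set.toFinite _)
          omega
        obtain ⟨x, hx1, hx2⟩ := orient_inter hA₁.1 hA₂.1
        refine ⟨x, fun B hB => ?_⟩
        obtain ⟨C, hC, hCB⟩ := claim_a B hB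
        rcases hsub hC with rfl | rfl
        · exact hCB hx1
        · exact hCB hx2
      · push_neg at h2
        obtain ⟨x, hx⟩ := sig_nonempty hne (orient_sub hA₁.1)
        refine ⟨x, fun B hB => ?_⟩
        obtain ⟨C, hC, hCB⟩ := claim_a B hB
        rw [h2 C hC] at hCB
        exact hCB hx
  obtain ⟨x, hx⟩ := key
  refine ⟨x, Subtype.ext ?_⟩
  ext C
  constructor
  · rintro ⟨hCSig, hxC⟩
    by_contra hCU
    have hCcU : Cᶜ ∈ U.val := by
      by_contra h
      exact hCU ((orient_iff hCSig).mpr h)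
    exact (hx Cᶜ hCcU) hxC
  · intro hCU
    exact ⟨orient_sub hCU, hx C hCU⟩


end Hyps

/-- The Buneman tree associated to a pairwise compatible split system. -/
noncomputable def buildTree (Sig : Set (Set X))
    (hne : ∀ A ∈ Sig, A ≠ ∅ ∧ A ≠ Set.univ)
    (hcompl : ∀ A ∈ Sig, Aᶜ ∈ Sig)
    (hcompat : ∀ A ∈ Sig, ∀ B ∈ Sig, SplitCompatible A B) : XTree X where
  V := Orient Sig
  fintypeV := Fintype.ofFinite _
  G := BG Sig
  connected := by
    have : Nonempty (Orient Sig) := ⟨labelOrient Sig hcompl (Classical.arbitrary X)⟩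
    exact ⟨fun U W => orient_reachable hne hcompl U W⟩
  acyclic := BG_acyclic hcompat
  φ := labelOrient Sig hcompl
  labelLowDegree := fun U h => BG_lowdeg hne hcompl U h

lemma buildTree_splits (Sig : Set (Set X))
    (hne : ∀ A ∈ Sig, A ≠ ∅ ∧ A ≠ Set.univ)
    (hcompl : ∀ A ∈ Sig, Aᶜ ∈ Sig)
    (hcompat : ∀ A ∈ Sig, ∀ B ∈ Sig, SplitCompatible A B) :
    (buildTree Sig hne hcompl hcompat).splits = Sig := by
  ext A
  constructor
  · rintro ⟨U, W, hadj, rfl⟩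
    have hadj' : (BG Sig).Adj U W := hadj
    obtain ⟨C, hd1, hd2⟩ := hadj'
    have heq := BG_side_eq hne hcompl hcompat ⟨C, hd1, hd2⟩ hd1 hd2
    have hCU : C ∈ (U : Orient Sig).val := by
      have h' : C ∈ (U : Orient Sig).val \ (W : Orient Sig).val := hd1 ▸ rfl
      exact h'.1
    have hCSig : C ∈ Sig := orient_sub hCU
    exact heq.symm ▸ hCSig
  · intro hA
    have hAc : Aᶜ ∈ Sig := hcompl A hA
    set U : Orient Sig := ⟨stdOrient Sig A, stdOrient_isOrient hne hcompl hcompat hA⟩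
    set W : Orient Sig := ⟨stdOrient Sig Aᶜ, stdOrient_isOrient hne hcompl hcompat hAc⟩
    have hd1 : U.val \ W.val = {A} := stdOrient_diff hne hcompl hA
    have hd2 : W.val \ U.val = {Aᶜ} := by
      have := stdOrient_diff hne hcompl hAc
      rwa [compl_compl] at this
    have hadj : (BG Sig).Adj U W := ⟨A, hd1, hd2⟩
    show ∃ u v : Orient Sig, (BG Sig).Adj u v ∧
      A = {x | ((BG Sig).deleteEdges {s(u, v)}).Reachable (labelOrient Sig hcompl x) u}
    exact ⟨U, W, hadj, (BG_side_eq hne hcompl hcompat hadj hd1 hd2).symm⟩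

end Buneman

section Uniqueness

variable {X : Type} [Fintype X] [Nonempty X] {T : XTree X}

lemma splits_ne (T : XTree X) : ∀ A ∈ T.splits, A ≠ ∅ ∧ A ≠ Set.univ := by
  rintro A ⟨u, v, h, rfl⟩
  constructor
  · show side T u v ≠ ∅
    exact Set.nonempty_iff_ne_empty.mp (side_nonempty h)
  · show side T u v ≠ Set.univ
    intro hU
    obtain ⟨x, hx⟩ := side_nonempty h.symm
    rw [← side_compl h, hU] at hx
    simp at hx

lemma splits_compl (T : XTree X) : ∀ A ∈ T.splits, Aᶜ ∈ T.splits := by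
  rintro A ⟨u, v, h, rfl⟩
  show (side T u v)ᶜ ∈ T.splits
  have h1 : (side T u v)ᶜ = side T v u := side_compl h
  show ∃ p q, T.G.Adj p q ∧ (side T u v)ᶜ = side T p q
  exact ⟨v, u, h.symm, h1⟩

/-- The orientation of the split system of `T` associated to a vertex. -/
def psiSet (T : XTree X) (v : T.V) : Set (Set X) :=
  {A | ∃ p q : T.V, T.G.Adj p q ∧ A = side T p q ∧
    (T.G.deleteEdges {s(p, q)}).Reachable v p}

lemma psiSet_mem {v p q : T.V} (hpq : T.G.Adj p q) :
    side T p q ∈ psiSet T v ↔ (T.G.deleteEdges {s(p, q)}).Reachable v p := by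
  constructor
  · rintro ⟨p', q', hpq', heq, hr⟩
    obtain ⟨rfl, rfl⟩ := side_inj hpq' hpq heq.symm
    exact hr
  · intro h
    exact ⟨p, q, hpq, rfl, h⟩

lemma psi_pair {v p q r s : T.V} (hpq : T.G.Adj p q) (hrs : T.G.Adj r s)
    (h1 : (T.G.deleteEdges {s(p, q)}).Reachable v p)
    (h2 : (T.G.deleteEdges {s(r, s)}).Reachable v r) :
    (side T p q ∩ side T r s).Nonempty := by
  by_cases he : s(p, q) = s(r, s)
  · rcases Sym2.eq_iff.mp he with ⟨rfl, rfl⟩ | ⟨rfl, rfl⟩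
    · obtain ⟨x, hx⟩ := side_nonempty hpq
      exact ⟨x, hx, hx⟩
    · exact absurd (h1.symm.trans (reach_swap h2)) (bridge_T hpq)
  · rcases reach_or_T p q r with hr1 | hr1
    · rcases reach_or_T r s p with hp1 | hp1
      · -- both edges point away: middle argument
        obtain ⟨x, hx1, hx2⟩ := middle_label hpq hrs.symm (reach_swap hp1)
        refine ⟨x, hx1, ?_⟩
        by_contra hc
        exact hx2 ((not_mem_side hrs).mp hc)
      · -- v sits in the middle
        obtain ⟨x, hx1, hx2⟩ := middle_label hrs hpq.symm (reach_swap hr1)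
        refine ⟨x, ?_, hx1⟩
        by_contra hc
        exact hx2 ((not_mem_side hpq).mp hc)
    · rcases reach_or_T r s p with hp1 | hp1
      · obtain ⟨x, hx⟩ := side_nonempty hpq
        exact ⟨x, hx, side_step hpq hr1 hp1 hx⟩
      · exfalso
        have hrp : ¬ (T.G.deleteEdges {s(p, q)}).Reachable r p := by
          intro h'
          exact bridge_T hpq (h'.symm.trans hr1)
        have hv : (T.G.deleteEdges {s(r, s)}).Reachable v p := reach_side h1 hrp
        exact bridge_T hrs (h2.symm.trans (hv.trans hp1))

lemma psiSet_orient (T : XTree X) (v : T.V) : IsOrient T.splits (psiSet T v) := by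
  refine ⟨?_, ?_, ?_⟩
  · rintro A ⟨p, q, hpq, rfl, -⟩
    exact side_mem_splits hpq
  · rintro A ⟨p, q, hpq, rfl⟩
    show side T p q ∈ psiSet T v ↔ (side T p q)ᶜ ∉ psiSet T v
    rw [side_compl hpq, psiSet_mem hpq, psiSet_mem hpq.symm]
    constructor
    · intro h hq
      exact bridge_T hpq (h.symm.trans (reach_swap hq))
    · intro h
      rcases reach_or_T p q v with h' | h'
      · exact h'
      · exact absurd (reach_swap h') h
  · rintro A ⟨p, q, hpq, rfl, hr1⟩ B ⟨r, s, hrs, rfl, hr2⟩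
    exact psi_pair hpq hrs hr1 hr2

/-- The bundled orientation map. -/
def psi (T : XTree X) (v : T.V) : Orient T.splits := ⟨psiSet T v, psiSet_orient T v⟩

lemma first_edge {u w : T.V} (huw : u ≠ w) :
    ∃ m, T.G.Adj u m ∧ side T u m ∈ psiSet T u ∧ side T u m ∉ psiSet T w := by
  classical
  obtain ⟨p0⟩ := T.connected.preconnected u w
  obtain ⟨m, hum, Q, hPeq⟩ := Walk.exists_eq_cons_of_ne huw p0.toPath.val
  have hPpath : (Walk.cons hum Q).IsPath := hPeq ▸ p0.toPath.prop
  rw [Walk.cons_isPath_iff] at hPpath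
  obtain ⟨hQpath, huQ⟩ := hPpath
  have hwm : (T.G.deleteEdges {s(u, m)}).Reachable w m := by
    refine Reachable.symm (reachable_deleteEdges_iff.mpr ⟨Q, ?_⟩)
    intro e he hee
    rw [Set.mem_singleton_iff] at hee
    subst hee
    exact huQ (Q.fst_mem_support_of_mem_edges he)
  refine ⟨m, hum, (psiSet_mem hum).mpr (Reachable.refl u), ?_⟩
  rw [psiSet_mem hum]
  intro h
  exact bridge_T hum (h.symm.trans hwm)

lemma psi_inj : Function.Injective (psi T) := by
  intro u w h
  by_contra hne
  obtain ⟨m, hum, h1, h2⟩ := first_edge hne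
  have : psiSet T u = psiSet T w := congrArg Subtype.val h
  rw [this] at h1
  exact h2 h1

lemma psi_surj : Function.Surjective (psi T) := by
  classical
  intro U
  have hv : Nonempty T.V := T.connected.nonempty
  suffices h : ∀ n, ∀ v : T.V, (U.val \ psiSet T v).ncard = n → ∃ w, psi T w = U by
    exact h _ (Classical.arbitrary T.V) rfl
  intro n
  induction n using Nat.strong_induction_on with
  | _ n ih =>
    intro v hn
    by_cases h0 : U.val \ psiSet T v = ∅
    · exact ⟨v, (orient_eq_of_diff_empty (W := psi T v) h0).symm⟩
    · obtain ⟨A, hAU, hAv⟩ := Set.nonempty_iff_ne_empty.mpr h0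
      have hAsp : A ∈ T.splits := orient_sub (U := U) hAU
      obtain ⟨p, q, hpq, rfl⟩ := hAsp
      rw [show ({ x | (T.G.deleteEdges {s(p, q)}).Reachable (T.φ x) p }) = side T p q from rfl]
        at hAU hAv
      have hvq : (T.G.deleteEdges {s(p, q)}).Reachable v q := by
        rcases reach_or_T p q v with h' | h'
        · exact absurd ((psiSet_mem hpq).mpr h') hAv
        · exact h'
      have hkey : U.val \ psiSet T p ⊆ (U.val \ psiSet T v) \ {side T p q} := by
        rintro B ⟨hBU, hBp⟩
        have hBsp : B ∈ T.splits := orient_sub (U := U) hBU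
        obtain ⟨r, s, hrs, rfl⟩ := hBsp
        rw [show ({ x | (T.G.deleteEdges {s(r, s)}).Reachable (T.φ x) r }) = side T r s from
          rfl] at hBU hBp ⊢
        have hpr : ¬ (T.G.deleteEdges {s(r, s)}).Reachable p r := by
          intro h'
          exact hBp ((psiSet_mem hrs).mpr h')
        refine ⟨⟨hBU, ?_⟩, ?_⟩
        · -- side T r s ∉ psiSet T v
          rw [psiSet_mem hrs]
          intro hvr
          obtain ⟨x, hxA, hxB⟩ := orient_inter (U := U) hAU hBU
          have hxA' : (T.G.deleteEdges {s(p, q)}).Reachable (T.φ x) p := hxA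
          have hxB' : (T.G.deleteEdges {s(r, s)}).Reachable (T.φ x) r := hxB
          obtain ⟨p₁, hp₁⟩ := reachable_deleteEdges_iff.mp hvr
          by_cases hcase : s(p, q) ∈ p₁.edges
          · have hps : p ∈ p₁.support := p₁.fst_mem_support_of_mem_edges hcase
            refine hpr (reachable_deleteEdges_iff.mpr ⟨p₁.dropUntil p hps, ?_⟩)
            intro e he
            exact hp₁ e (p₁.edges_dropUntil_subset hps he)
          · have hvr1 : (T.G.deleteEdges {s(p, q)}).Reachable v r :=
              reachable_deleteEdges_iff.mpr ⟨p₁, fun e he h' => hcase (by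
                rw [Set.mem_singleton_iff] at h'
                exact h' ▸ he)⟩
            have hrq : (T.G.deleteEdges {s(p, q)}).Reachable r q := hvr1.symm.trans hvq
            obtain ⟨p₂, hp₂⟩ := reachable_deleteEdges_iff.mp hxA'
            by_cases hcase2 : s(r, s) ∈ p₂.edges
            · have hrsup : r ∈ p₂.support := p₂.fst_mem_support_of_mem_edges hcase2
              have hrp : (T.G.deleteEdges {s(p, q)}).Reachable r p :=
                reachable_deleteEdges_iff.mpr ⟨p₂.dropUntil r hrsup, fun e he =>
                  hp₂ e (p₂.edges_dropUntil_subset hrsup he)⟩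
              exact bridge_T hpq (hrp.symm.trans hrq)
            · have hxp2 : (T.G.deleteEdges {s(r, s)}).Reachable (T.φ x) p :=
                reachable_deleteEdges_iff.mpr ⟨p₂, fun e he h' => hcase2 (by
                  rw [Set.mem_singleton_iff] at h'
                  exact h' ▸ he)⟩
              exact hpr (hxB'.symm.trans hxp2).symm
        · -- side T r s ≠ side T p q
          intro h'
          rw [Set.mem_singleton_iff] at h'
          apply hBp
          rw [h']
          exact (psiSet_mem hpq).mpr (Reachable.refl p)
      have hlt : (U.val \ psiSet T p).ncard < n := by
        have h1 : (U.val \ psiSet T p).ncard ≤ ((U.val \ psiSet T v) \ {side T p q}).ncard :=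
          Set.ncard_le_ncard hkey (Set.toFinite _)
        have h2 : ((U.val \ psiSet T v) \ {side T p q}).ncard < (U.val \ psiSet T v).ncard := by
          apply Set.ncard_lt_ncard _ (Set.toFinite _)
          rw [Set.ssubset_iff_subset_ne]
          refine ⟨Set.diff_subset, fun h => ?_⟩
          have h3 : side T p q ∈ (U.val \ psiSet T v) \ {side T p q} := by
            rw [h]; exact ⟨hAU, hAv⟩
          exact h3.2 rfl
        omega
      exact ih _ (hn ▸ hlt) p rfl

lemma psi_diff {u w : T.V} (huw : T.G.Adj u w) :
    psiSet T u \ psiSet T w = {side T u w} := by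
  ext B
  simp only [Set.mem_diff, Set.mem_singleton_iff]
  constructor
  · rintro ⟨⟨r, s, hrs, rfl, hur⟩, hBw⟩
    rw [psiSet_mem hrs] at hBw
    by_cases hee : s(r, s) = s(u, w)
    · rcases Sym2.eq_iff.mp hee with ⟨rfl, rfl⟩ | ⟨rfl, rfl⟩
      · rfl
      · exact absurd (reach_swap hur) (bridge_T huw)
    · exfalso
      have huw' : (T.G.deleteEdges {s(r, s)}).Adj u w := adj_del huw (fun h => hee h.symm)
      exact hBw (huw'.symm.reachable.trans hur)
  · rintro rfl
    refine ⟨(psiSet_mem huw).mpr (Reachable.refl u), ?_⟩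
    rw [psiSet_mem huw]
    intro h
    exact bridge_T huw h.symm

lemma psi_adj {u w : T.V} : T.G.Adj u w ↔ (BG T.splits).Adj (psi T u) (psi T w) := by
  constructor
  · intro huw
    refine ⟨side T u w, psi_diff huw, ?_⟩
    rw [side_compl huw]
    exact psi_diff huw.symm
  · rintro hadj
    have hne' : u ≠ w := by
      rintro rfl
      exact (BG T.splits).irrefl hadj
    obtain ⟨A, hd1, hd2⟩ := hadj
    obtain ⟨m, hum, h1, h2⟩ := first_edge hne'
    have hA : side T u m = A := by
      have : side T u m ∈ psiSet T u \ psiSet T w := ⟨h1, h2⟩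
      rw [show psiSet T u \ psiSet T w = (psi T u).val \ (psi T w).val from rfl, hd1] at this
      exact this
    obtain ⟨m', hwm', h1', h2'⟩ := first_edge hne'.symm
    have hA' : side T w m' = Aᶜ := by
      have : side T w m' ∈ psiSet T w \ psiSet T u := ⟨h1', h2'⟩
      rw [show psiSet T w \ psiSet T u = (psi T w).val \ (psi T u).val from rfl, hd2] at this
      exact this
    have heq : side T w m' = side T m u := by
      rw [hA', ← hA, side_compl hum]
    obtain ⟨rfl, rfl⟩ := side_inj hwm' hum.symm heq
    exact hum

lemma psi_phi (hcompl : ∀ A ∈ T.splits, Aᶜ ∈ T.splits) (x : X) :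
    psi T (T.φ x) = labelOrient T.splits hcompl x := by
  apply Subtype.ext
  ext A
  constructor
  · rintro ⟨p, q, hpq, rfl, hr⟩
    exact ⟨side_mem_splits hpq, hr⟩
  · rintro ⟨hA, hx⟩
    obtain ⟨p, q, hpq, rfl⟩ := hA
    exact ⟨p, q, hpq, rfl, hx⟩

lemma isom_symm {T₁ T₂ : XTree X} (h : T₁.Isom T₂) : T₂.Isom T₁ := by
  obtain ⟨e, hadj, hphi⟩ := h
  refine ⟨e.symm, fun u v => ?_, fun x => ?_⟩
  · have := hadj (e.symm u) (e.symm v)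
    rw [e.apply_symm_apply, e.apply_symm_apply] at this
    exact this.symm
  · rw [← hphi x, e.symm_apply_apply]

lemma isom_trans {T₁ T₂ T₃ : XTree X} (h : T₁.Isom T₂) (h' : T₂.Isom T₃) : T₁.Isom T₃ := by
  obtain ⟨e, hadj, hphi⟩ := h
  obtain ⟨e', hadj', hphi'⟩ := h'
  refine ⟨e.trans e', fun u v => ?_, fun x => ?_⟩
  · rw [hadj u v, hadj' (e u) (e v)]
    rfl
  · rw [Equiv.trans_apply, hphi, hphi']

lemma iso_to_buildTree (T : XTree X) (Sig : Set (Set X))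
    (hne : ∀ A ∈ Sig, A ≠ ∅ ∧ A ≠ Set.univ)
    (hcompl : ∀ A ∈ Sig, Aᶜ ∈ Sig)
    (hcompat : ∀ A ∈ Sig, ∀ B ∈ Sig, SplitCompatible A B)
    (hT : T.splits = Sig) : T.Isom (buildTree Sig hne hcompl hcompat) := by
  subst hT
  refine ⟨Equiv.ofBijective (psi T) ⟨psi_inj, psi_surj⟩, fun u v => ?_, fun x => ?_⟩
  · exact psi_adj
  · exact psi_phi hcompl x

end Uniqueness

end SplitsEquiv

/-- Splits Equivalence Theorem (Buneman): splits of a common `X`-tree are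
pairwise compatible, and conversely every collection of pairwise compatible
`X`-splits is the split set of an `X`-tree which is unique up to isomorphism. -/
theorem splits_equivalence {X : Type} [Fintype X] [Nonempty X] :
    (∀ T : XTree X, ∀ A ∈ T.splits, ∀ B ∈ T.splits, SplitCompatible A B) ∧
    (∀ Sig : Set (Set X),
      (∀ A ∈ Sig, A ≠ ∅ ∧ A ≠ Set.univ) →
      (∀ A ∈ Sig, Aᶜ ∈ Sig) →
      (∀ A ∈ Sig, ∀ B ∈ Sig, SplitCompatible A B) →
      (∃ T : XTree X, T.splits = Sig) ∧
        ∀ T T' : XTree X, T.splits = Sig → T'.splits = Sig → T.Isom T') := by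
  constructor
  · exact fun T => SplitsEquiv.splits_compatible T
  · intro Sig h1 h2 h3
    refine ⟨⟨SplitsEquiv.buildTree Sig h1 h2 h3, SplitsEquiv.buildTree_splits Sig h1 h2 h3⟩, ?_⟩
    intro T T' hT hT'
    exact SplitsEquiv.isom_trans (SplitsEquiv.iso_to_buildTree T Sig h1 h2 h3 hT)
      (SplitsEquiv.isom_symm (SplitsEquiv.iso_to_buildTree T' Sig h1 h2 h3 hT'))
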